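/- Under the quantum-walk setup, the scattering map is unitary: if ψ ∈ ℓ^∞(A) solves Uψ = e^{−iλ}ψ with incoming data α^♭ = (ψ(a_{1,0}^♭),…,ψ(a_{N,0}^♭)) and outgoing data α^♯(λ) = (ψ(a_{1,1}^♯),…,ψ(a_{N,1}^♯)), then ‖α^♭‖_{ℂᴺ} = ‖α^♯(λ)‖_{ℂᴺ}. -/

import Mathlib

lemma aux_tsum {A : Type*} {N : ℕ} (Aint : Finset A) (f : Fin N → A)
    (hinj : Function.Injective f) (hnot : ∀ j, f j ∉ Aint) (h : A → ℂ) :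
    ∑' a : A, ‖(↑Aint ∪ Set.range f : Set A).indicator h a‖ ^ 2 =
      ∑ a ∈ Aint, ‖h a‖ ^ 2 + ∑ j, ‖h (f j)‖ ^ 2 := by
  classical
  have hsub : ∀ a ∉ (Aint ∪ Finset.image f Finset.univ),
      ‖(↑Aint ∪ Set.range f : Set A).indicator h a‖ ^ 2 = 0 := by
    intro a ha
    simp only [Finset.mem_union, Finset.mem_image, Finset.mem_univ, true_and, not_or,
      not_exists] at ha
    rw [Set.indicator_of_notMem]
    · simp
    · rintro (h1 | ⟨j, rfl⟩)
      · exact ha.1 h1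
      · exact ha.2 j rfl
  rw [tsum_eq_sum hsub, Finset.sum_union, Finset.sum_image (fun a _ b _ hab => hinj hab)]
  · congr 1
    · exact Finset.sum_congr rfl fun a ha => by
        rw [Set.indicator_of_mem (Set.mem_union_left _ (by exact_mod_cast ha))]
    · exact Finset.sum_congr rfl fun j _ => by
        rw [Set.indicator_of_mem (Set.mem_union_right _ (Set.mem_range_self j))]
  · rw [Finset.disjoint_right]
    intro a ha
    simp only [Finset.mem_image, Finset.mem_univ, true_and] at ha
    obtain ⟨j, rfl⟩ := ha
    exact hnot j

theorem scattering_matrix_unitary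
    {A : Type*} (N : ℕ) (Aint : Finset A)
    (flat0 sharp1 : Fin N → A)
    (hflat_inj : Function.Injective flat0) (hsharp_inj : Function.Injective sharp1)
    (hflat_not : ∀ j, flat0 j ∉ Aint) (hsharp_not : ∀ j, sharp1 j ∉ Aint)
    (U : (A → ℂ) →ₗ[ℂ] (A → ℂ))
    (hnorm : ∀ ψ : A → ℂ, Function.support ψ ⊆ (↑Aint ∪ Set.range flat0) →
      ∑' a : A, ‖U ψ a‖ ^ 2 = ∑' a : A, ‖ψ a‖ ^ 2)
    (hintertwine : ∀ ψ : A → ℂ,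
      U ((↑Aint ∪ Set.range flat0 : Set A).indicator ψ) =
        (↑Aint ∪ Set.range sharp1 : Set A).indicator (U ψ))
    (ψ : A → ℂ) (hψ_bdd : ∃ C : ℝ, ∀ a, ‖ψ a‖ ≤ C)
    (c : ℂ) (hc : ‖c‖ = 1) (heig : U ψ = c • ψ) :
    ‖(WithLp.equiv 2 (Fin N → ℂ)).symm (fun j => ψ (flat0 j))‖ =
      ‖(WithLp.equiv 2 (Fin N → ℂ)).symm (fun j => ψ (sharp1 j))‖ := by
  classical
  have key := hnorm ((↑Aint ∪ Set.range flat0 : Set A).indicator ψ)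
    (Set.support_indicator_subset)
  rw [hintertwine, heig] at key
  have hlhs : ∑' a : A, ‖(↑Aint ∪ Set.range sharp1 : Set A).indicator (c • ψ) a‖ ^ 2 =
      ∑ a ∈ Aint, ‖ψ a‖ ^ 2 + ∑ j, ‖ψ (sharp1 j)‖ ^ 2 := by
    rw [aux_tsum Aint sharp1 hsharp_inj hsharp_not]
    simp [norm_smul, hc]
  have hrhs : ∑' a : A, ‖(↑Aint ∪ Set.range flat0 : Set A).indicator ψ a‖ ^ 2 =
      ∑ a ∈ Aint, ‖ψ a‖ ^ 2 + ∑ j, ‖ψ (flat0 j)‖ ^ 2 :=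
    aux_tsum Aint flat0 hflat_inj hflat_not ψ
  rw [hlhs, hrhs] at key
  have hsum : ∑ j, ‖ψ (sharp1 j)‖ ^ 2 = ∑ j, ‖ψ (flat0 j)‖ ^ 2 := by linarith
  rw [EuclideanSpace.norm_eq, EuclideanSpace.norm_eq]
  simp only [WithLp.equiv_symm_apply, WithLp.ofLp_toLp]
  rw [hsum]
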